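/- Let n > i ≥ 3, p > 1, and let f : V(T_{n,i}) → ℝ satisfy f(t_n) = 0, f(t_k) > 0 for all 1 ≤ k ≤ n-1, and R_{p,T_{n,i}}[f] = λ_{1,p}(T_{n,i}) (i.e., f is a positive first p-Dirichlet eigenfunction of T_{n,i}). Then f does not achieve its maximum over V(T_{n,i}) at any vertex t_j of the tail, i.e., f(t_j) < max_{v∈V(T_{n,i})} f(v) for all i ≤ j ≤ n. -/

import Mathlib

open scoped Classical

noncomputable section

/-- The term `|f x - f y| ^ p` as a function on unordered pairs. -/
noncomputable def edgeTerm {V : Type*} (p : ℝ) (f : V → ℝ) : Sym2 V → ℝ :=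
  Sym2.lift ⟨fun x y => |f x - f y| ^ p, fun x y => by dsimp only; rw [abs_sub_comm]⟩

/-- The `p`-Rayleigh quotient of a function on a finite graph. -/
noncomputable def rayleigh {V : Type*} [Fintype V] [DecidableEq V] (G : SimpleGraph V)
    (p : ℝ) (f : V → ℝ) : ℝ :=
  (∑ e ∈ G.edgeFinset, edgeTerm p f e) / ∑ v, |f v| ^ p

/-- The first `p`-Dirichlet eigenvalue: infimum of the Rayleigh quotient over nonzero
functions vanishing on the boundary (vertices of degree one). -/
noncomputable def lambda1 {V : Type*} [Fintype V] [DecidableEq V] (G : SimpleGraph V)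
    (p : ℝ) : ℝ :=
  sInf {r | ∃ f : V → ℝ, f ≠ 0 ∧ (∀ v, G.degree v = 1 → f v = 0) ∧ r = rayleigh G p f}

/-- The tadpole graph `T_{n,i}` on vertices `0,…,n-1` (vertex `t_k` is `k-1`):
edges `t_k t_{k+1}` for `1 ≤ k ≤ n-1` together with the edge `t_1 t_i`. -/
def tadpole (n i : ℕ) : SimpleGraph (Fin n) :=
  SimpleGraph.fromRel (fun a b => a.val + 1 = b.val ∨ (a.val = 0 ∧ b.val = i - 1))

/-- The path graph on `n` vertices `0,…,n-1`. -/
def pathG (n : ℕ) : SimpleGraph (Fin n) :=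
  SimpleGraph.fromRel (fun a b : Fin n => a.val + 1 = b.val)

/-- The set of edges of `G` with exactly one endpoint in `U`. -/
noncomputable def crossEdges {V : Type*} [Fintype V] [DecidableEq V] (G : SimpleGraph V)
    (U : Finset V) : Finset (Sym2 V) :=
  G.edgeFinset.filter fun e =>
    Sym2.lift ⟨fun x y => (x ∈ U ∧ y ∉ U) ∨ (x ∉ U ∧ y ∈ U),
      fun x y => by simp only [eq_iff_iff]; tauto⟩ e

/-- The Dirichlet Cheeger constant: infimum of `|E(U,Uᶜ)|/|U|` over nonempty sets `U`
of interior vertices (vertices of degree at least two). -/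
noncomputable def dCheeger {V : Type*} [Fintype V] [DecidableEq V] (G : SimpleGraph V) : ℝ :=
  sInf {r | ∃ U : Finset V, U.Nonempty ∧ (∀ v ∈ U, 2 ≤ G.degree v) ∧
    r = ((crossEdges G U).card : ℝ) / U.card}

noncomputable def phiP (p x : ℝ) : ℝ := |x| ^ (p - 2) * x

lemma phiP_neg (p x : ℝ) : phiP p (-x) = - phiP p x := by
  simp [phiP, abs_neg]

lemma phiP_pos {p x : ℝ} (hx : 0 < x) : 0 < phiP p x :=
  mul_pos (Real.rpow_pos_of_pos (abs_pos.2 hx.ne') _) hx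

lemma pos_of_phiP_pos {p x : ℝ} (h : 0 < phiP p x) : 0 < x := by
  by_contra hx
  push_neg at hx
  exact absurd h (not_lt.2 (mul_nonpos_of_nonneg_of_nonpos (Real.rpow_nonneg (abs_nonneg x) _) hx))

lemma phiP_nonpos {p x : ℝ} (hx : x ≤ 0) : phiP p x ≤ 0 :=
  mul_nonpos_of_nonneg_of_nonpos (Real.rpow_nonneg (abs_nonneg x) _) hx

lemma phiP_zero (p : ℝ) : phiP p 0 = 0 := by simp [phiP]

lemma tadHasDerivAt_abs_rpow {p : ℝ} (hp : 1 < p) (u : ℝ) :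
    HasDerivAt (fun x : ℝ => |x| ^ p) (p * phiP p u) u := by
  rcases lt_trichotomy u 0 with h | h | h
  · have h1 : HasDerivAt (fun x : ℝ => (-x) ^ p) (p * (-u) ^ (p - 1) * (-1)) u := by
      have h2 := (Real.hasDerivAt_rpow_const (x := -u) (p := p) (Or.inl (by linarith))).comp u
        (hasDerivAt_neg u)
      simpa [mul_comm, mul_assoc, Function.comp_def] using h2
    have heq : (fun x : ℝ => |x| ^ p) =ᶠ[nhds u] (fun x : ℝ => (-x) ^ p) := by
      filter_upwards [eventually_lt_nhds h] with x hx
      rw [abs_of_neg hx]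
    have h3 := h1.congr_of_eventuallyEq heq
    refine h3.congr_deriv ?_
    have hup : (0:ℝ) < -u := by linarith
    have he : (-u) ^ (p-1) = (-u) ^ (p-2) * (-u) := by
      rw [show p-1 = (p-2)+1 by ring, Real.rpow_add hup, Real.rpow_one]
    rw [he]
    simp only [phiP, abs_of_neg h]
    ring
  · subst h
    rw [phiP_zero, mul_zero]
    rw [hasDerivAt_iff_isLittleO]
    have h0p : |(0:ℝ)| ^ p = 0 := by
      rw [abs_zero]; exact Real.zero_rpow (by linarith)
    simp only [sub_zero, smul_zero, sub_zero, h0p]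
    have t1 : Filter.Tendsto (fun x : ℝ => |x| ^ (p-1)) (nhds 0) (nhds 0) := by
      have hc : ContinuousAt (fun y : ℝ => y ^ (p-1)) 0 :=
        Real.continuousAt_rpow_const 0 (p-1) (Or.inr (by linarith))
      have := hc.tendsto.comp (continuous_abs.tendsto' (0:ℝ) 0 abs_zero)
      simpa [Real.zero_rpow (show p - 1 ≠ 0 by linarith), Function.comp_def] using this
    have t2 : (fun x : ℝ => |x| ^ (p-1)) =o[nhds 0] (fun _ : ℝ => (1:ℝ)) :=
      (Asymptotics.isLittleO_one_iff ℝ).2 t1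
    have t3 : (fun x : ℝ => |x| ^ (p-1) * x) =o[nhds 0] (fun x : ℝ => 1 * x) :=
      t2.mul_isBigO (Asymptotics.isBigO_refl _ _)
    have t4 := t3.norm_left
    simp only [one_mul] at t4
    have heq : (fun x : ℝ => |x| ^ p) = (fun x : ℝ => ‖|x| ^ (p-1) * x‖) := by
      funext x
      rcases eq_or_ne x 0 with rfl | hx
      · simp [Real.zero_rpow (show p ≠ 0 by linarith)]
      · rw [Real.norm_eq_abs, abs_mul, abs_of_nonneg (Real.rpow_nonneg (abs_nonneg x) _)]
        have h5 : |x| ^ ((p-1)+1) = |x| ^ (p-1) * |x| ^ (1:ℝ) :=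
          Real.rpow_add (abs_pos.2 hx) _ _
        rw [show ((p-1)+1 : ℝ) = p by ring, Real.rpow_one] at h5
        exact h5
    rw [heq]
    exact t4
  · have h1 : HasDerivAt (fun x : ℝ => x ^ p) (p * u ^ (p - 1)) u :=
      Real.hasDerivAt_rpow_const (Or.inl h.ne')
    have heq : (fun x : ℝ => |x| ^ p) =ᶠ[nhds u] (fun x : ℝ => x ^ p) := by
      filter_upwards [eventually_gt_nhds h] with x hx
      rw [abs_of_pos hx]
    have h3 := h1.congr_of_eventuallyEq heq
    refine h3.congr_deriv ?_
    have he : u ^ (p-1) = u ^ (p-2) * u := by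
      rw [show p-1 = (p-2)+1 by ring, Real.rpow_add h, Real.rpow_one]
    rw [he]
    simp only [phiP, abs_of_pos h]

lemma hasDerivAt_term {p : ℝ} (hp : 1 < p) (c b : ℝ) :
    HasDerivAt (fun t : ℝ => |c + b * t| ^ p) (p * phiP p c * b) 0 := by
  have h1 : HasDerivAt (fun t : ℝ => c + b * t) b 0 := by
    simpa using ((hasDerivAt_id (0:ℝ)).const_mul b)
  have h2 := (tadHasDerivAt_abs_rpow hp (c + b * 0)).comp 0 h1
  simpa [Function.comp_def] using h2

def vtx (n k : ℕ) (h : 0 < n) : Fin n := ⟨k % n, Nat.mod_lt _ h⟩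

lemma vtx_val {n k : ℕ} (h : 0 < n) (hk : k < n) : (vtx n k h).val = k := by
  simp [vtx, Nat.mod_eq_of_lt hk]

lemma vtx_inj {n a b : ℕ} (h0 : 0 < n) (ha : a < n) (hb : b < n)
    (h : vtx n a h0 = vtx n b h0) : a = b := by
  have h2 := congrArg Fin.val h
  rwa [vtx_val h0 ha, vtx_val h0 hb] at h2

lemma tadpole_edgeFinset (n i : ℕ) (hi : 3 ≤ i) (hn : i < n) (h0 : 0 < n) :
    (tadpole n i).edgeFinset =
      ((Finset.range (n-1)).image fun k => s(vtx n k h0, vtx n (k+1) h0)) ∪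
        {s(vtx n 0 h0, vtx n (i-1) h0)} := by
  ext e
  induction e using Sym2.ind with
  | _ a b =>
    rw [SimpleGraph.mem_edgeFinset]
    simp only [SimpleGraph.mem_edgeFinset, SimpleGraph.mem_edgeSet, tadpole,
      SimpleGraph.fromRel_adj, Finset.mem_union, Finset.mem_image, Finset.mem_range,
      Finset.mem_singleton, Sym2.eq_iff]
    constructor
    · rintro ⟨hab, h | h⟩
      · rcases h with h | ⟨h1, h2⟩
        · left
          exact ⟨a.val, by omega, by
            left
            constructor
            · ext; rw [vtx_val h0 a.isLt]
            · ext; rw [vtx_val h0 (by omega : a.val + 1 < n)]; omega⟩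
        · right; left
          constructor
          · ext; rw [vtx_val h0 (by omega : 0 < n)]; omega
          · ext; rw [vtx_val h0 (by omega : i - 1 < n)]; omega
      · rcases h with h | ⟨h1, h2⟩
        · left
          exact ⟨b.val, by omega, by
            right
            constructor
            · ext; rw [vtx_val h0 b.isLt]
            · ext; rw [vtx_val h0 (by omega : b.val + 1 < n)]; omega⟩
        · right; right
          constructor
          · ext; rw [vtx_val h0 (by omega : i - 1 < n)]; omega
          · ext; rw [vtx_val h0 (by omega : 0 < n)]; omega
    · intro h
      rcases h with ⟨k, hk, ⟨ha, hb⟩ | ⟨ha, hb⟩⟩ | ⟨ha, hb⟩ | ⟨ha, hb⟩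
      · have ha' : a.val = k := by rw [← ha, vtx_val h0 (by omega)]
        have hb' : b.val = k + 1 := by rw [← hb, vtx_val h0 (by omega)]
        exact ⟨by simp only [ne_eq, Fin.ext_iff]; omega, by omega⟩
      · have ha' : a.val = k + 1 := by rw [← hb, vtx_val h0 (by omega)]
        have hb' : b.val = k := by rw [← ha, vtx_val h0 (by omega)]
        exact ⟨by simp only [ne_eq, Fin.ext_iff]; omega, by omega⟩
      · have ha' : a.val = 0 := by rw [ha, vtx_val h0 (by omega)]
        have hb' : b.val = i - 1 := by rw [hb, vtx_val h0 (by omega)]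
        exact ⟨by simp only [ne_eq, Fin.ext_iff]; omega, by omega⟩
      · have ha' : a.val = i - 1 := by rw [ha, vtx_val h0 (by omega)]
        have hb' : b.val = 0 := by rw [hb, vtx_val h0 (by omega)]
        exact ⟨by simp only [ne_eq, Fin.ext_iff]; omega, by omega⟩

lemma tadpole_sum_edges (n i : ℕ) (hi : 3 ≤ i) (hn : i < n) (h0 : 0 < n)
    (F : Sym2 (Fin n) → ℝ) :
    ∑ e ∈ (tadpole n i).edgeFinset, F e =
      (∑ k ∈ Finset.range (n-1), F s(vtx n k h0, vtx n (k+1) h0)) +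
        F s(vtx n 0 h0, vtx n (i-1) h0) := by
  rw [tadpole_edgeFinset n i hi hn h0]
  have hnotmem : s(vtx n 0 h0, vtx n (i-1) h0) ∉
      (Finset.range (n-1)).image fun k => s(vtx n k h0, vtx n (k+1) h0) := by
    simp only [Finset.mem_image, Finset.mem_range, not_exists, not_and]
    intro k hk h
    rw [Sym2.eq_iff] at h
    rcases h with ⟨h1, h2⟩ | ⟨h1, h2⟩
    · have e1 := vtx_inj h0 (by omega) (by omega) h1
      have e2 := vtx_inj h0 (by omega) (by omega) h2
      omega
    · have e1 := vtx_inj h0 (by omega) (by omega) h2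
      have e2 := vtx_inj h0 (by omega) (by omega) h1
      omega
  rw [Finset.sum_union (Finset.disjoint_singleton_right.2 hnotmem), Finset.sum_singleton]
  congr 1
  rw [Finset.sum_image]
  intro a ha b hb h
  simp only [Finset.coe_range, Set.mem_Iio] at ha hb
  rw [Sym2.eq_iff] at h
  rcases h with ⟨h1, h2⟩ | ⟨h1, h2⟩
  · exact vtx_inj h0 (by omega) (by omega) h1
  · have e1 := vtx_inj h0 (by omega) (by omega) h1
    have e2 := vtx_inj h0 (by omega) (by omega) h2
    omega

lemma tadpole_two_le_degree (n i : ℕ) (hi : 3 ≤ i) (hn : i < n) (v : Fin n)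
    (hv : v.val < n - 1) : 2 ≤ (tadpole n i).degree v := by
  classical
  have h0 : 0 < n := by omega
  have key : ∀ u w : Fin n, u ≠ w → (tadpole n i).Adj v u → (tadpole n i).Adj v w →
      2 ≤ (tadpole n i).degree v := by
    intro u w huw hu hw
    rw [← SimpleGraph.card_neighborFinset_eq_degree]
    have hsub : ({u, w} : Finset (Fin n)) ⊆ (tadpole n i).neighborFinset v := by
      intro x hx
      simp only [Finset.mem_insert, Finset.mem_singleton] at hx
      rcases hx with rfl | rfl <;> simp [SimpleGraph.mem_neighborFinset, hu, hw]
    calc 2 = ({u, w} : Finset (Fin n)).card := by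
              rw [Finset.card_insert_of_notMem (by simpa using huw), Finset.card_singleton]
      _ ≤ _ := Finset.card_le_card hsub
  rcases Nat.eq_zero_or_pos v.val with hv0 | hv1
  · refine key (vtx n 1 h0) (vtx n (i-1) h0) ?_ ?_ ?_
    · intro h
      have := vtx_inj h0 (by omega) (by omega) h
      omega
    · rw [tadpole, SimpleGraph.fromRel_adj]
      refine ⟨?_, Or.inl (Or.inl ?_)⟩
      · simp only [ne_eq, Fin.ext_iff, vtx_val h0 (by omega : 1 < n)]; omega
      · rw [vtx_val h0 (by omega)]; omega
    · rw [tadpole, SimpleGraph.fromRel_adj]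
      refine ⟨?_, Or.inl (Or.inr ?_)⟩
      · simp only [ne_eq, Fin.ext_iff, vtx_val h0 (by omega : i - 1 < n)]; omega
      · rw [vtx_val h0 (by omega)]; omega
  · refine key (vtx n (v.val - 1) h0) (vtx n (v.val + 1) h0) ?_ ?_ ?_
    · intro h
      have := vtx_inj h0 (by omega) (by omega) h
      omega
    · rw [tadpole, SimpleGraph.fromRel_adj]
      refine ⟨?_, Or.inr (Or.inl ?_)⟩
      · simp only [ne_eq, Fin.ext_iff, vtx_val h0 (by omega : v.val - 1 < n)]; omega
      · rw [vtx_val h0 (by omega)]; omega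
    · rw [tadpole, SimpleGraph.fromRel_adj]
      refine ⟨?_, Or.inl (Or.inl ?_)⟩
      · intro hcon
        have := congrArg Fin.val hcon
        rw [vtx_val h0 (by omega : v.val + 1 < n)] at this
        omega
      · rw [vtx_val h0 (by omega)]


lemma edgeTerm_eval {n : ℕ} (p : ℝ) (g : Fin n → ℝ) (a b : Fin n) :
    edgeTerm p g s(a, b) = |g a - g b| ^ p := rfl

lemma edgeTerm_nonneg {V : Type*} (p : ℝ) (g : V → ℝ) (e : Sym2 V) :
    0 ≤ edgeTerm p g e := by
  induction e using Sym2.ind with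
  | _ a b => exact Real.rpow_nonneg (abs_nonneg _) _

/-- A positive first `p`-Dirichlet eigenfunction of the tadpole graph `T_{n,i}`
does not achieve its maximum on the tail.  (Vertex `t_k` is `k - 1 : Fin n`; the tail
consists of the vertices `t_j` with `i ≤ j ≤ n`, and `f(t_n) = 0`.) -/
theorem eigenfunction_max_not_in_tail (n i : ℕ) (hi : 3 ≤ i) (hn : i < n)
    {p : ℝ} (hp : 1 < p) (f : Fin n → ℝ)
    (hend : f ⟨n - 1, by omega⟩ = 0)
    (hpos : ∀ v : Fin n, v.val < n - 1 → 0 < f v)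
    (heig : rayleigh (tadpole n i) p f = lambda1 (tadpole n i) p) :
    ∀ j : Fin n, i - 1 ≤ j.val → f j < ⨆ v : Fin n, f v := by
  classical
  have h0 : 0 < n := by omega
  have hp0 : (0:ℝ) < p := by linarith
  set G := tadpole n i with hG
  set lam := rayleigh G p f with hlam
  set F : ℕ → ℝ := fun k => f (vtx n k h0) with hF
  have hFval : ∀ k (hk : k < n), F k = f ⟨k, by omega⟩ := by
    intro k hk
    simp only [hF, vtx, Nat.mod_eq_of_lt hk]
  have hFend : F (n-1) = 0 := by rw [hFval _ (by omega)]; exact hend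
  have hFpos : ∀ k, k < n - 1 → 0 < F k := by
    intro k hk
    rw [hFval _ (by omega)]
    exact hpos _ hk
  set E : ℕ → ℕ → ℝ := fun a k => if k = a then 1 else 0 with hE
  -- denominator positivity
  have hDpos : (0:ℝ) < ∑ v : Fin n, |f v| ^ p := by
    refine Finset.sum_pos' (fun v _ => Real.rpow_nonneg (abs_nonneg _) _) ?_
    refine ⟨vtx n 0 h0, Finset.mem_univ _, ?_⟩
    have : 0 < f (vtx n 0 h0) := hpos _ (by rw [vtx_val h0 (by omega)]; omega)
    exact Real.rpow_pos_of_pos (abs_pos.2 this.ne') _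
  -- lam positivity
  have hlampos : 0 < lam := by
    rw [hlam, rayleigh]
    refine div_pos ?_ hDpos
    rw [hG, tadpole_sum_edges n i hi hn h0]
    have h1 : 0 < ∑ k ∈ Finset.range (n-1), edgeTerm p f s(vtx n k h0, vtx n (k+1) h0) := by
      refine Finset.sum_pos' (fun k _ => edgeTerm_nonneg _ _ _) ?_
      refine ⟨n-2, Finset.mem_range.2 (by omega), ?_⟩
      rw [edgeTerm_eval]
      have e1 : f (vtx n (n-2) h0) = F (n-2) := rfl
      have e2 : f (vtx n (n-2+1) h0) = F (n-1) := by rw [show n-2+1 = n-1 by omega]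
      rw [e1, e2, hFend, sub_zero]
      exact Real.rpow_pos_of_pos (abs_pos.2 (hFpos (n-2) (by omega)).ne') _
    exact add_pos_of_pos_of_nonneg h1 (edgeTerm_nonneg _ _ _)
  -- Euler–Lagrange equations
  have EL : ∀ a : ℕ, a ≤ n - 2 →
      (∑ k ∈ Finset.range (n-1), phiP p (F k - F (k+1)) * (E a k - E a (k+1))) +
        phiP p (F 0 - F (i-1)) * (E a 0 - E a (i-1)) = lam * phiP p (F a) := by
    intro a ha
    set x : Fin n := vtx n a h0 with hx
    set g : ℝ → Fin n → ℝ := fun t => Function.update f x (f x + t) with hgdef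
    have hgv : ∀ t (v : Fin n), g t v = f v + (if v = x then 1 else 0) * t := by
      intro t v
      by_cases hv : v = x
      · subst hv; simp [hgdef]
      · simp [hgdef, Function.update_of_ne hv, hv]
    have hgk : ∀ t k, k < n → g t (vtx n k h0) = F k + E a k * t := by
      intro t k hk
      rw [hgv]
      have hiff : (vtx n k h0 = x) ↔ (k = a) :=
        ⟨fun h => vtx_inj h0 hk (by omega) h, fun h => by rw [hx, h]⟩
      by_cases hka : k = a
      · rw [if_pos (hiff.2 hka), hE]
        simp only [if_pos hka, hF]
      · rw [if_neg (fun h => hka (hiff.1 h)), hE]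
        simp only [if_neg hka, hF]
    set Nf : ℝ → ℝ := fun t =>
      (∑ k ∈ Finset.range (n-1), |(F k - F (k+1)) + (E a k - E a (k+1)) * t| ^ p) +
        |(F 0 - F (i-1)) + (E a 0 - E a (i-1)) * t| ^ p with hNf
    set Df : ℝ → ℝ := fun t => ∑ v : Fin n, |f v + (if v = x then 1 else 0) * t| ^ p with hDf
    have hray : ∀ t, rayleigh G p (g t) = Nf t / Df t := by
      intro t
      rw [rayleigh, hNf, hDf]
      congr 1
      · rw [hG, tadpole_sum_edges n i hi hn h0]
        congr 1
        · refine Finset.sum_congr rfl fun k hk => ?_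
          rw [Finset.mem_range] at hk
          rw [edgeTerm_eval, hgk t k (by omega), hgk t (k+1) (by omega),
            show (F k + E a k * t) - (F (k+1) + E a (k+1) * t)
              = (F k - F (k+1)) + (E a k - E a (k+1)) * t from by ring]
        · rw [edgeTerm_eval, hgk t 0 (by omega), hgk t (i-1) (by omega),
            show (F 0 + E a 0 * t) - (F (i-1) + E a (i-1) * t)
              = (F 0 - F (i-1)) + (E a 0 - E a (i-1)) * t from by ring]
      · exact Finset.sum_congr rfl fun v _ => by rw [hgv]
    have hg0 : g 0 = f := by
      funext v; rw [hgv]; ring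
    have h00 : Nf 0 / Df 0 = lam := by
      rw [← hray 0, hg0]
    have hadm : ∀ t, lam ≤ Nf t / Df t := by
      intro t
      rw [← hray t]
      have step : rayleigh G p f = lambda1 G p := heig
      rw [show lam = rayleigh G p f from rfl, step, lambda1]
      refine csInf_le ⟨0, ?_⟩ ?_
      · rintro r ⟨h, -, -, rfl⟩
        exact div_nonneg (Finset.sum_nonneg fun e _ => edgeTerm_nonneg _ _ _)
          (Finset.sum_nonneg fun v _ => Real.rpow_nonneg (abs_nonneg _) _)
      · refine ⟨g t, ?_, ?_, rfl⟩
        · set w : Fin n := if a = 0 then vtx n 1 h0 else vtx n 0 h0 with hw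
          have hwx : w ≠ x := by
            rw [hw, hx]
            by_cases ha0 : a = 0
            · rw [if_pos ha0]
              intro h
              have := vtx_inj h0 (by omega) (by omega) h
              omega
            · rw [if_neg ha0]
              intro h
              have := vtx_inj h0 (by omega) (by omega) h
              omega
          have hwpos : 0 < f w := by
            rw [hw]
            by_cases ha0 : a = 0
            · rw [if_pos ha0]; exact hpos _ (by rw [vtx_val h0 (by omega)]; omega)
            · rw [if_neg ha0]; exact hpos _ (by rw [vtx_val h0 (by omega)]; omega)
          intro hzero
          have hzw : g t w = 0 := by rw [hzero]; rfl
          rw [hgv t w, if_neg hwx, zero_mul, add_zero] at hzw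
          exact hwpos.ne' hzw
        · intro v hv
          have hvn : ¬ (v.val < n - 1) := by
            intro hc
            have := tadpole_two_le_degree n i hi hn v hc
            rw [← hG] at this
            omega
          have hvx : v ≠ x := by
            rw [hx]
            intro h
            have := congrArg Fin.val h
            rw [vtx_val h0 (by omega)] at this
            omega
          rw [hgv t v, if_neg hvx, zero_mul, add_zero]
          have hveq : v = (⟨n-1, by omega⟩ : Fin n) := by
            apply Fin.ext
            have := v.isLt
            simpa using (by omega : v.val = n - 1)
          rw [hveq]
          exact hend
    have hmin : IsLocalMin (fun t => Nf t / Df t) 0 := by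
      refine Filter.Eventually.of_forall fun t => ?_
      show Nf 0 / Df 0 ≤ Nf t / Df t
      rw [h00]
      exact hadm t
    have hNd : HasDerivAt Nf
        (p * ((∑ k ∈ Finset.range (n-1), phiP p (F k - F (k+1)) * (E a k - E a (k+1))) +
          phiP p (F 0 - F (i-1)) * (E a 0 - E a (i-1)))) 0 := by
      have h1 : HasDerivAt
          (fun t => ∑ k ∈ Finset.range (n-1), |(F k - F (k+1)) + (E a k - E a (k+1)) * t| ^ p)
          (∑ k ∈ Finset.range (n-1), p * phiP p (F k - F (k+1)) * (E a k - E a (k+1))) 0 :=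
        HasDerivAt.fun_sum fun k _ => hasDerivAt_term hp _ _
      have h2 := hasDerivAt_term hp (F 0 - F (i-1)) (E a 0 - E a (i-1))
      have h3 := h1.add h2
      refine h3.congr_deriv ?_
      rw [mul_add, Finset.mul_sum]
      simp only [mul_assoc]
    have hDd : HasDerivAt Df (p * phiP p (f x)) 0 := by
      have h1 : HasDerivAt (fun t => ∑ v : Fin n, |f v + (if v = x then 1 else 0) * t| ^ p)
          (∑ v : Fin n, p * phiP p (f v) * (if v = x then 1 else 0)) 0 :=
        HasDerivAt.fun_sum fun v _ => hasDerivAt_term hp _ _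
      have h2 : (∑ v : Fin n, p * phiP p (f v) * (if v = x then 1 else 0))
          = p * phiP p (f x) := by
        simp [mul_ite]
      rw [← h2]
      exact h1
    have hDf0 : Df 0 ≠ 0 := by
      have : Df 0 = ∑ v : Fin n, |f v| ^ p := by
        rw [hDf]
        exact Finset.sum_congr rfl fun v _ => by rw [mul_zero, add_zero]
      rw [this]
      exact hDpos.ne'
    have hdiv := hNd.div hDd hDf0
    have hz := hmin.hasDerivAt_eq_zero hdiv
    rw [div_eq_zero_iff] at hz
    have hnum : p * ((∑ k ∈ Finset.range (n-1), phiP p (F k - F (k+1)) * (E a k - E a (k+1))) +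
          phiP p (F 0 - F (i-1)) * (E a 0 - E a (i-1))) * Df 0
        - Nf 0 * (p * phiP p (f x)) = 0 := by
      rcases hz with h | h
      · exact h
      · exact absurd h (pow_ne_zero 2 hDf0)
    have hfx : f x = F a := rfl
    rw [hfx] at hnum
    have h2 : ((∑ k ∈ Finset.range (n-1), phiP p (F k - F (k+1)) * (E a k - E a (k+1))) +
          phiP p (F 0 - F (i-1)) * (E a 0 - E a (i-1))) * Df 0
        = Nf 0 * phiP p (F a) := by
      apply mul_left_cancel₀ (ne_of_gt hp0)
      linear_combination hnum
    rw [← h00, div_mul_eq_mul_div, eq_div_iff hDf0]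
    exact h2
  -- simplify the indicator sums
  have hsum1 : ∀ a : ℕ, a < n - 1 →
      (∑ k ∈ Finset.range (n-1), phiP p (F k - F (k+1)) * E a k)
        = phiP p (F a - F (a+1)) := by
    intro a ha
    have hc : ∀ k, phiP p (F k - F (k+1)) * E a k
        = if k = a then phiP p (F k - F (k+1)) else 0 := by
      intro k
      simp only [hE]
      by_cases h : k = a <;> simp [h]
    rw [Finset.sum_congr rfl fun k _ => hc k,
      Finset.sum_ite_eq' (Finset.range (n-1)) a (fun k => phiP p (F k - F (k+1))),
      if_pos (Finset.mem_range.2 ha)]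
  have hsum2a : (∑ k ∈ Finset.range (n-1), phiP p (F k - F (k+1)) * E 0 (k+1)) = 0 := by
    refine Finset.sum_eq_zero fun k _ => ?_
    simp only [hE]
    simp
  have hsum2b : ∀ a : ℕ, 1 ≤ a → a ≤ n - 1 →
      (∑ k ∈ Finset.range (n-1), phiP p (F k - F (k+1)) * E a (k+1))
        = phiP p (F (a-1) - F a) := by
    intro a h1 h2
    have hc : ∀ k, phiP p (F k - F (k+1)) * E a (k+1)
        = if k = a - 1 then phiP p (F k - F (k+1)) else 0 := by
      intro k
      simp only [hE]
      by_cases h : k = a - 1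
      · rw [if_pos (by omega), if_pos h, mul_one]
      · rw [if_neg (by omega), if_neg h, mul_zero]
    rw [Finset.sum_congr rfl fun k _ => hc k,
      Finset.sum_ite_eq' (Finset.range (n-1)) (a-1) (fun k => phiP p (F k - F (k+1))),
      if_pos (Finset.mem_range.2 (by omega)), show a - 1 + 1 = a by omega]
  -- specialized Euler–Lagrange equations
  have EL0 : phiP p (F 0 - F 1) + phiP p (F 0 - F (i-1)) = lam * phiP p (F 0) := by
    have h := EL 0 (by omega)
    simp only [mul_sub] at h
    rw [Finset.sum_sub_distrib, hsum1 0 (by omega), hsum2a] at h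
    have e0 : E 0 0 = (1:ℝ) := by simp [hE]
    have e1 : E 0 (i-1) = (0:ℝ) := by simp only [hE]; rw [if_neg (by omega)]
    rw [e0, e1] at h
    norm_num at h
    linarith
  have ELmid : ∀ a : ℕ, 1 ≤ a → a ≤ n - 2 → a ≠ i - 1 →
      phiP p (F a - F (a+1)) - phiP p (F (a-1) - F a) = lam * phiP p (F a) := by
    intro a h1 h2 h3
    have h := EL a h2
    simp only [mul_sub] at h
    rw [Finset.sum_sub_distrib, hsum1 a (by omega), hsum2b a h1 (by omega)] at h
    have e0 : E a 0 = (0:ℝ) := by simp only [hE]; rw [if_neg (by omega)]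
    have e1 : E a (i-1) = (0:ℝ) := by
      simp only [hE]
      rw [if_neg (by omega)]
    rw [e0, e1] at h
    linarith
  have ELjun : phiP p (F (i-1) - F i) - phiP p (F (i-2) - F (i-1)) - phiP p (F 0 - F (i-1))
      = lam * phiP p (F (i-1)) := by
    have h := EL (i-1) (by omega)
    simp only [mul_sub] at h
    rw [Finset.sum_sub_distrib, hsum1 (i-1) (by omega), hsum2b (i-1) (by omega) (by omega)] at h
    have e0 : E (i-1) 0 = (0:ℝ) := by simp only [hE]; rw [if_neg (by omega)]
    have e1 : E (i-1) (i-1) = (1:ℝ) := by simp [hE]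
    rw [e0, e1, show i-1+1 = i by omega, show i-1-1 = i-2 by omega] at h
    linarith
  -- telescoping over the head cycle
  have head : ∀ m : ℕ, m ≤ i - 2 →
      phiP p (F 0 - F (i-1)) + phiP p (F m - F (m+1))
        = lam * ∑ k ∈ Finset.range (m+1), phiP p (F k) := by
    intro m
    induction m with
    | zero =>
      intro _
      rw [Finset.sum_range_one]
      linarith [EL0]
    | succ m ih =>
      intro hm
      have ihm := ih (by omega)
      have hmid := ELmid (m+1) (by omega) (by omega) (by omega)
      rw [Nat.add_sub_cancel] at hmid
      rw [Finset.sum_range_succ, mul_add]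
      linarith
  have hS : 0 < ∑ k ∈ Finset.range (i-1), phiP p (F k) := by
    refine Finset.sum_pos (fun k hk => ?_) ⟨0, Finset.mem_range.2 (by omega)⟩
    rw [Finset.mem_range] at hk
    exact phiP_pos (hFpos k (by omega))
  have headEnd := head (i-2) le_rfl
  rw [show i-2+1 = i-1 by omega] at headEnd
  have Tstart : 0 < phiP p (F (i-1) - F i) := by
    have hphi : 0 < phiP p (F (i-1)) := phiP_pos (hFpos (i-1) (by omega))
    have h2 : phiP p (F (i-1) - F i)
        = lam * phiP p (F (i-1)) + lam * ∑ k ∈ Finset.range (i-1), phiP p (F k) := by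
      linarith [headEnd, ELjun]
    rw [h2]
    exact add_pos (mul_pos hlampos hphi) (mul_pos hlampos hS)
  have tail : ∀ k : ℕ, i - 1 ≤ k → k ≤ n - 2 → 0 < phiP p (F k - F (k+1)) := by
    intro k hk1
    induction k, hk1 using Nat.le_induction with
    | base =>
      intro _
      rw [show i-1+1 = i by omega]
      exact Tstart
    | succ k hk ih =>
      intro hk2
      have ihv := ih (by omega)
      have hmid := ELmid (k+1) (by omega) (by omega) (by omega)
      rw [Nat.add_sub_cancel] at hmid
      have hphi : 0 < phiP p (F (k+1)) := phiP_pos (hFpos (k+1) (by omega))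
      have := mul_pos hlampos hphi
      linarith
  have hdec : ∀ m : ℕ, i - 1 ≤ m → m ≤ n - 1 → F m ≤ F (i-1) := by
    intro m hm1
    induction m, hm1 using Nat.le_induction with
    | base => intro _; exact le_rfl
    | succ m hm ih =>
      intro h2
      have hlt : 0 < F m - F (m+1) := pos_of_phiP_pos (tail m hm (by omega))
      have := ih (by omega)
      linarith
  have hhead : F (i-1) < F 0 ∨ F (i-1) < F (i-2) := by
    by_contra hc
    push_neg at hc
    obtain ⟨h1, h2⟩ := hc
    have n1 : phiP p (F 0 - F (i-1)) ≤ 0 := phiP_nonpos (by linarith)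
    have n2 : phiP p (F (i-2) - F (i-1)) ≤ 0 := phiP_nonpos (by linarith)
    have := mul_pos hlampos hS
    linarith
  -- conclusion
  intro j hj
  have hjv : F j.val = f j := by rw [hFval j.val j.isLt]
  obtain ⟨b, hb1, hb2⟩ : ∃ b : ℕ, b < n - 1 ∧ F (i-1) < F b := by
    rcases hhead with h | h
    · exact ⟨0, by omega, h⟩
    · exact ⟨i-2, by omega, h⟩
  have hchain : F j.val ≤ F (i-1) := hdec j.val hj (by omega)
  have hsup : F b ≤ ⨆ v : Fin n, f v := by
    have hFb : F b = f (vtx n b h0) := rfl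
    rw [hFb]
    exact le_ciSup (Set.Finite.bddAbove (Set.finite_range f)) _
  linarith [hjv, hchain, hb2, hsup]
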